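/- arXiv:1709.00200 — 2 statements merged into one kernel-verified Lean document; each statement's English description precedes it below -/
import Mathlib

section
/- Define Γ(N) for a quantum channel N with Choi matrix J_N as the supremum of tr(J_N R) over positive semidefinite R on A⊗B and density operators ρ on A satisfying -ρ⊗I ≤ R^{T_B} ≤ ρ⊗I. Then Γ is multiplicative under tensor products: Γ(N₁⊗N₂) ≥ Γ(N₁)·Γ(N₂), witnessed by the tensor product of feasible solutions. -/
open Matrix Kronecker ComplexOrder

/-- Partial transpose on the second (B) system of a bipartite matrix. -/
def ptB {A B : Type*} (M : Matrix (A × B) (A × B) ℂ) : Matrix (A × B) (A × B) ℂ :=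
  Matrix.of fun p q => M (p.1, q.2) (q.1, p.2)

/-- The SDP value `Γ(N)` of a channel with Choi matrix `J`: the supremum of
`tr(J R)` over PSD `R` and density operators `ρ` with `-ρ⊗I ≤ R^{T_B} ≤ ρ⊗I`. -/
noncomputable def Gamma {A B : Type*} [Fintype A] [Fintype B] [DecidableEq A] [DecidableEq B]
    (J : Matrix (A × B) (A × B) ℂ) : ℝ :=
  sSup {r | ∃ (R : Matrix (A × B) (A × B) ℂ) (ρ : Matrix A A ℂ),
    R.PosSemidef ∧ ρ.PosSemidef ∧ ρ.trace = 1 ∧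
    (ρ ⊗ₖ (1 : Matrix B B ℂ) - ptB R).PosSemidef ∧
    (ptB R + ρ ⊗ₖ (1 : Matrix B B ℂ)).PosSemidef ∧
    r = ((J * R).trace).re}

open scoped MatrixOrder in
theorem Matrix.posSemidef_iff_eq_transpose_mul_self {n : Type*} [Fintype n] [DecidableEq n]
    {A : Matrix n n ℂ} : A.PosSemidef ↔ ∃ B : Matrix n n ℂ, A = Bᴴ * B := by
  constructor
  · intro hA
    exact CStarAlgebra.nonneg_iff_eq_star_mul_self.mp hA.nonneg
  · rintro ⟨B, rfl⟩
    exact Matrix.posSemidef_conjTranspose_mul_self B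

namespace GammaAux

variable {n : Type*} [Fintype n]

lemma psd_diag_nonneg [DecidableEq n] {M : Matrix n n ℂ} (hM : M.PosSemidef) (i : n) :
    0 ≤ M i i := by
  have h := hM.dotProduct_mulVec_nonneg (Pi.single i 1)
  simpa [dotProduct, mulVec, Pi.single_apply, Finset.sum_ite_eq, Finset.sum_ite_eq',
    mul_comm] using h

lemma psd_trace_nonneg [DecidableEq n] {M : Matrix n n ℂ} (hM : M.PosSemidef) :
    0 ≤ M.trace := by
  rw [Matrix.trace]
  exact Finset.sum_nonneg fun i _ => psd_diag_nonneg hM i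

lemma trace_mul_nonneg [DecidableEq n] {A B : Matrix n n ℂ}
    (hA : A.PosSemidef) (hB : B.PosSemidef) : 0 ≤ (A * B).trace := by
  obtain ⟨C, rfl⟩ := Matrix.posSemidef_iff_eq_transpose_mul_self.mp hB
  have h : (A * (Cᴴ * C)).trace = (C * A * Cᴴ).trace := by
    rw [← mul_assoc, Matrix.trace_mul_comm, ← mul_assoc]
  rw [h]
  exact psd_trace_nonneg (hA.mul_mul_conjTranspose_same C)

lemma kron_conjTranspose {m : Type*} (A : Matrix n n ℂ) (B : Matrix m m ℂ) :
    (A ⊗ₖ B)ᴴ = Aᴴ ⊗ₖ Bᴴ := by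
  ext ⟨a, b⟩ ⟨c, d⟩
  simp [Matrix.conjTranspose_apply, Matrix.kroneckerMap_apply, star_mul']

lemma kron_psd {m : Type*} [Fintype m] [DecidableEq n] [DecidableEq m]
    {A : Matrix n n ℂ} {B : Matrix m m ℂ}
    (hA : A.PosSemidef) (hB : B.PosSemidef) : (A ⊗ₖ B).PosSemidef := by
  obtain ⟨C, rfl⟩ := Matrix.posSemidef_iff_eq_transpose_mul_self.mp hA
  obtain ⟨D, rfl⟩ := Matrix.posSemidef_iff_eq_transpose_mul_self.mp hB
  have h : (Cᴴ * C) ⊗ₖ (Dᴴ * D) = (C ⊗ₖ D)ᴴ * (C ⊗ₖ D) := by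
    rw [kron_conjTranspose, ← Matrix.mul_kronecker_mul]
  rw [h]
  exact Matrix.posSemidef_conjTranspose_mul_self _

lemma psd_smul {M : Matrix n n ℂ} (hM : M.PosSemidef) {c : ℝ} (hc : 0 ≤ c) :
    (((c : ℂ)) • M).PosSemidef := by
  refine Matrix.PosSemidef.of_dotProduct_mulVec_nonneg ?_ fun x => ?_
  · show ((c : ℂ) • M)ᴴ = (c : ℂ) • M
    rw [Matrix.conjTranspose_smul, hM.1.eq]
    norm_num
  · rw [Matrix.smul_mulVec, dotProduct_smul]
    exact mul_nonneg (by exact_mod_cast Complex.zero_le_real.mpr hc) (hM.dotProduct_mulVec_nonneg x)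

lemma trace_submatrix_equiv {m : Type*} [Fintype m] (e : m ≃ n) (M : Matrix n n ℂ) :
    (M.submatrix e e).trace = M.trace := by
  rw [Matrix.trace, Matrix.trace]
  exact Fintype.sum_equiv e _ _ fun i => rfl

lemma entry_norm_le_trace [DecidableEq n] {M : Matrix n n ℂ} (hM : M.PosSemidef) (p q : n) :
    ‖M p q‖ ≤ M.trace.re := by
  obtain ⟨C, hC⟩ := Matrix.posSemidef_iff_eq_transpose_mul_self.mp hM
  set x : EuclideanSpace ℂ n := WithLp.toLp 2 (fun k => C k p) with hx
  set y : EuclideanSpace ℂ n := WithLp.toLp 2 (fun k => C k q) with hy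
  have hxy : M p q = inner ℂ x y := by
    rw [hC]
    simp [Matrix.mul_apply, Matrix.conjTranspose_apply, PiLp.inner_apply, hx, hy,
      RCLike.inner_apply, mul_comm]
  have hxx : (M p p).re = ‖x‖ ^ 2 := by
    have : M p p = inner ℂ x x := by
      rw [hC]
      simp [Matrix.mul_apply, Matrix.conjTranspose_apply, PiLp.inner_apply, hx,
        RCLike.inner_apply, mul_comm, -inner_self_eq_norm_sq_to_K]
    rw [this, ← inner_self_eq_norm_sq (𝕜 := ℂ) x]
    rfl
  have hyy : (M q q).re = ‖y‖ ^ 2 := by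
    have : M q q = inner ℂ y y := by
      rw [hC]
      simp [Matrix.mul_apply, Matrix.conjTranspose_apply, PiLp.inner_apply, hy,
        RCLike.inner_apply, mul_comm, -inner_self_eq_norm_sq_to_K]
    rw [this, ← inner_self_eq_norm_sq (𝕜 := ℂ) y]
    rfl
  have hcs : ‖M p q‖ ≤ ‖x‖ * ‖y‖ := by
    rw [hxy]
    exact norm_inner_le_norm x y
  have hdiag : ∀ i, 0 ≤ (M i i).re := fun i => (Complex.nonneg_iff.mp (psd_diag_nonneg hM i)).1
  have htr : M.trace.re = ∑ i, (M i i).re := by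
    rw [Matrix.trace]
    exact Complex.re_sum _ _
  have hp : (M p p).re ≤ M.trace.re := by
    rw [htr]
    exact Finset.single_le_sum (fun i _ => hdiag i) (Finset.mem_univ p)
  have hq : (M q q).re ≤ M.trace.re := by
    rw [htr]
    exact Finset.single_le_sum (fun i _ => hdiag i) (Finset.mem_univ q)
  have ht0 : 0 ≤ M.trace.re := le_trans (hdiag p) hp
  nlinarith [norm_nonneg x, norm_nonneg y, hcs, sq_nonneg (‖x‖ - ‖y‖)]

lemma sSup_mul_sSup_le {S₁ S₂ S : Set ℝ} (hbdd : BddAbove S)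
    (h₁ : ∀ r ∈ S₁, 0 ≤ r) (h₂ : ∀ r ∈ S₂, 0 ≤ r) (hS : ∀ r ∈ S, 0 ≤ r)
    (hmul : ∀ r₁ ∈ S₁, ∀ r₂ ∈ S₂, r₁ * r₂ ∈ S) :
    sSup S₁ * sSup S₂ ≤ sSup S := by
  have hS0 : 0 ≤ sSup S := Real.sSup_nonneg hS
  rcases S₁.eq_empty_or_nonempty with rfl | hne₁
  · simpa [Real.sSup_empty] using hS0
  rcases S₂.eq_empty_or_nonempty with rfl | hne₂
  · simpa [Real.sSup_empty] using hS0
  have key : ∀ r₁ ∈ S₁, r₁ * sSup S₂ ≤ sSup S := by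
    intro r₁ h₁'
    have hr₁ : 0 ≤ r₁ := h₁ _ h₁'
    rcases eq_or_lt_of_le hr₁ with heq | hpos
    · simpa [← heq] using hS0
    · have hle : sSup S₂ ≤ sSup S / r₁ := by
        refine csSup_le hne₂ fun r₂ h₂' => ?_
        rw [le_div_iff₀ hpos]
        exact le_csSup hbdd (by simpa [mul_comm] using hmul _ h₁' _ h₂')
      calc r₁ * sSup S₂ ≤ r₁ * (sSup S / r₁) := mul_le_mul_of_nonneg_left hle hr₁
        _ = sSup S := by field_simp
  have h2' : 0 ≤ sSup S₂ := Real.sSup_nonneg h₂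
  rcases eq_or_lt_of_le h2' with heq | hpos
  · rw [← heq, mul_zero]; exact hS0
  · have hle : sSup S₁ ≤ sSup S / sSup S₂ := by
      refine csSup_le hne₁ fun r₁ h₁' => ?_
      rw [le_div_iff₀ hpos]
      exact key _ h₁'
    calc sSup S₁ * sSup S₂ ≤ (sSup S / sSup S₂) * sSup S₂ :=
          mul_le_mul_of_nonneg_right hle h2'
      _ = sSup S := by field_simp

variable {A B : Type*} [Fintype A] [Fintype B] [DecidableEq A] [DecidableEq B]

/-- The feasible-value set defining `Gamma`. -/
def gset (J : Matrix (A × B) (A × B) ℂ) : Set ℝ :=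
  {r | ∃ (R : Matrix (A × B) (A × B) ℂ) (ρ : Matrix A A ℂ),
    R.PosSemidef ∧ ρ.PosSemidef ∧ ρ.trace = 1 ∧
    (ρ ⊗ₖ (1 : Matrix B B ℂ) - ptB R).PosSemidef ∧
    (ptB R + ρ ⊗ₖ (1 : Matrix B B ℂ)).PosSemidef ∧
    r = ((J * R).trace).re}

lemma gamma_eq (J : Matrix (A × B) (A × B) ℂ) : Gamma J = sSup (gset J) := rfl

lemma ptB_trace (R : Matrix (A × B) (A × B) ℂ) : (ptB R).trace = R.trace := rfl

lemma gset_nonneg {J : Matrix (A × B) (A × B) ℂ} (hJ : J.PosSemidef) :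
    ∀ r ∈ gset J, 0 ≤ r := by
  rintro r ⟨R, ρ, hR, hρ, hρt, hc₁, hc₂, rfl⟩
  exact (Complex.nonneg_iff.mp (trace_mul_nonneg hJ hR)).1

lemma gset_bddAbove (J : Matrix (A × B) (A × B) ℂ) : BddAbove (gset J) := by
  refine ⟨(∑ p : A × B, ∑ q : A × B, ‖J p q‖) * (Fintype.card B : ℝ), ?_⟩
  rintro r ⟨R, ρ, hR, hρ, hρt, hc₁, hc₂, rfl⟩
  -- trace of R is bounded by card B
  have htr0 : 0 ≤ R.trace.re := (Complex.nonneg_iff.mp (psd_trace_nonneg hR)).1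
  have htrd : 0 ≤ ((ρ ⊗ₖ (1 : Matrix B B ℂ)).trace - (ptB R).trace) := by
    have := psd_trace_nonneg hc₁
    rwa [Matrix.trace_sub] at this
  have htrB : R.trace.re ≤ (Fintype.card B : ℝ) := by
    have h1 : (ptB R).trace.re ≤ (ρ ⊗ₖ (1 : Matrix B B ℂ)).trace.re := by
      have := (Complex.nonneg_iff.mp htrd).1
      simpa [Complex.sub_re] using this
    have h2 : (ρ ⊗ₖ (1 : Matrix B B ℂ)).trace = (Fintype.card B : ℂ) := by
      rw [Matrix.trace_kronecker, hρt, one_mul, Matrix.trace_one]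
    rw [ptB_trace] at h1
    rw [h2] at h1
    simpa using h1
  have hbound : ∀ p q : A × B, ‖R p q‖ ≤ R.trace.re := fun p q =>
    entry_norm_le_trace hR p q
  calc ((J * R).trace).re ≤ ∑ p : A × B, ∑ q : A × B, ‖J p q‖ * R.trace.re := by
        rw [Matrix.trace]
        rw [show (∑ p, (J * R).diag p).re = ∑ p, ((J * R) p p).re from Complex.re_sum _ _]
        refine Finset.sum_le_sum fun p _ => ?_
        rw [Matrix.mul_apply,
          show (∑ q, J p q * R q p).re = ∑ q, (J p q * R q p).re from Complex.re_sum _ _]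
        refine Finset.sum_le_sum fun q _ => ?_
        calc (J p q * R q p).re ≤ ‖J p q * R q p‖ := Complex.re_le_norm _
          _ = ‖J p q‖ * ‖R q p‖ := norm_mul _ _
          _ ≤ ‖J p q‖ * R.trace.re :=
              mul_le_mul_of_nonneg_left (hbound q p) (norm_nonneg _)
    _ = (∑ p : A × B, ∑ q : A × B, ‖J p q‖) * R.trace.re := by
        rw [Finset.sum_mul]
        exact Finset.sum_congr rfl fun p _ => (Finset.sum_mul _ _ _).symm
    _ ≤ (∑ p : A × B, ∑ q : A × B, ‖J p q‖) * (Fintype.card B : ℝ) := by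
        refine mul_le_mul_of_nonneg_left htrB ?_
        exact Finset.sum_nonneg fun p _ => Finset.sum_nonneg fun q _ => norm_nonneg _

end GammaAux

open GammaAux in
/-- `Γ` is supermultiplicative under tensor products:
`Γ(N₁ ⊗ N₂) ≥ Γ(N₁) · Γ(N₂)`, where the Choi matrix of the tensor product channel is
`J₁ ⊗ J₂` after reordering the tensor factors from `(A₁×B₁)×(A₂×B₂)` to `(A₁×A₂)×(B₁×B₂)`. -/
theorem stmt_2 {A₁ B₁ A₂ B₂ : Type*}
    [Fintype A₁] [Fintype B₁] [Fintype A₂] [Fintype B₂]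
    [DecidableEq A₁] [DecidableEq B₁] [DecidableEq A₂] [DecidableEq B₂]
    (J₁ : Matrix (A₁ × B₁) (A₁ × B₁) ℂ) (J₂ : Matrix (A₂ × B₂) (A₂ × B₂) ℂ)
    (hJ₁ : J₁.PosSemidef) (hJ₂ : J₂.PosSemidef) :
    Gamma J₁ * Gamma J₂ ≤
      Gamma ((Matrix.reindex (Equiv.prodProdProdComm A₁ B₁ A₂ B₂)
        (Equiv.prodProdProdComm A₁ B₁ A₂ B₂)) (J₁ ⊗ₖ J₂)) := by
  classical
  set e := Equiv.prodProdProdComm A₁ B₁ A₂ B₂ with he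
  set J := (Matrix.reindex e e) (J₁ ⊗ₖ J₂) with hJdef
  have hJ : J.PosSemidef := by
    rw [hJdef, Matrix.reindex_apply]
    exact (kron_psd hJ₁ hJ₂).submatrix _
  rw [gamma_eq, gamma_eq, gamma_eq]
  refine sSup_mul_sSup_le (gset_bddAbove J) (gset_nonneg hJ₁) (gset_nonneg hJ₂)
    (gset_nonneg hJ) ?_
  rintro r₁ ⟨R₁, ρ₁, hR₁, hρ₁, ht₁, hc₁, hd₁, rfl⟩ r₂ ⟨R₂, ρ₂, hR₂, hρ₂, ht₂, hc₂, hd₂, rfl⟩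
  refine ⟨(Matrix.reindex e e) (R₁ ⊗ₖ R₂), ρ₁ ⊗ₖ ρ₂, ?_, kron_psd hρ₁ hρ₂, ?_, ?_, ?_, ?_⟩
  · rw [Matrix.reindex_apply]
    exact (kron_psd hR₁ hR₂).submatrix _
  · rw [Matrix.trace_kronecker, ht₁, ht₂, one_mul]
  · -- feasibility: ρ⊗1 - ptB R is PSD
    have hptB : ptB ((Matrix.reindex e e) (R₁ ⊗ₖ R₂)) =
        (Matrix.reindex e e) ((ptB R₁) ⊗ₖ (ptB R₂)) := by
      ext ⟨⟨a, a'⟩, ⟨b, b'⟩⟩ ⟨⟨c, c'⟩, ⟨d, d'⟩⟩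
      rfl
    have hone : (ρ₁ ⊗ₖ ρ₂) ⊗ₖ (1 : Matrix (B₁ × B₂) (B₁ × B₂) ℂ) =
        (Matrix.reindex e e) ((ρ₁ ⊗ₖ (1 : Matrix B₁ B₁ ℂ)) ⊗ₖ (ρ₂ ⊗ₖ (1 : Matrix B₂ B₂ ℂ))) := by
      ext ⟨⟨a, a'⟩, ⟨b, b'⟩⟩ ⟨⟨c, c'⟩, ⟨d, d'⟩⟩
      simp only [he, Matrix.kroneckerMap_apply, Matrix.reindex_apply, Matrix.submatrix_apply,
        Matrix.one_apply, Equiv.prodProdProdComm_symm, Equiv.prodProdProdComm_apply,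
        Prod.mk.injEq]
      by_cases h1 : b = d <;> by_cases h2 : b' = d' <;> simp [h1, h2] <;> ring
    rw [hptB, hone]
    have hkey : (ρ₁ ⊗ₖ (1 : Matrix B₁ B₁ ℂ)) ⊗ₖ (ρ₂ ⊗ₖ (1 : Matrix B₂ B₂ ℂ)) -
        (ptB R₁) ⊗ₖ (ptB R₂) =
        (((1/2 : ℝ) : ℂ)) • (((ρ₁ ⊗ₖ (1 : Matrix B₁ B₁ ℂ) - ptB R₁)) ⊗ₖ
            ((ptB R₂ + ρ₂ ⊗ₖ (1 : Matrix B₂ B₂ ℂ))) +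
          ((ptB R₁ + ρ₁ ⊗ₖ (1 : Matrix B₁ B₁ ℂ))) ⊗ₖ
            ((ρ₂ ⊗ₖ (1 : Matrix B₂ B₂ ℂ) - ptB R₂))) := by
      ext ⟨⟨a, a'⟩, ⟨b, b'⟩⟩ ⟨⟨c, c'⟩, ⟨d, d'⟩⟩
      simp only [Matrix.kroneckerMap_apply, Matrix.sub_apply, Matrix.add_apply,
        Matrix.smul_apply, smul_eq_mul]
      push_cast
      ring
    have hsub : ∀ X Y : Matrix ((A₁ × B₁) × (A₂ × B₂)) ((A₁ × B₁) × (A₂ × B₂)) ℂ,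
        (Matrix.reindex e e) X - (Matrix.reindex e e) Y = (Matrix.reindex e e) (X - Y) := by
      intro X Y; ext i j; simp [Matrix.reindex_apply, Matrix.sub_apply]
    rw [hsub, hkey, Matrix.reindex_apply]
    refine Matrix.PosSemidef.submatrix ?_ _
    exact psd_smul ((kron_psd hc₁ hd₂).add (kron_psd hd₁ hc₂)) (by norm_num)
  · -- feasibility: ptB R + ρ⊗1 is PSD
    have hptB : ptB ((Matrix.reindex e e) (R₁ ⊗ₖ R₂)) =
        (Matrix.reindex e e) ((ptB R₁) ⊗ₖ (ptB R₂)) := by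
      ext ⟨⟨a, a'⟩, ⟨b, b'⟩⟩ ⟨⟨c, c'⟩, ⟨d, d'⟩⟩
      rfl
    have hone : (ρ₁ ⊗ₖ ρ₂) ⊗ₖ (1 : Matrix (B₁ × B₂) (B₁ × B₂) ℂ) =
        (Matrix.reindex e e) ((ρ₁ ⊗ₖ (1 : Matrix B₁ B₁ ℂ)) ⊗ₖ (ρ₂ ⊗ₖ (1 : Matrix B₂ B₂ ℂ))) := by
      ext ⟨⟨a, a'⟩, ⟨b, b'⟩⟩ ⟨⟨c, c'⟩, ⟨d, d'⟩⟩
      simp only [he, Matrix.kroneckerMap_apply, Matrix.reindex_apply, Matrix.submatrix_apply,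
        Matrix.one_apply, Equiv.prodProdProdComm_symm, Equiv.prodProdProdComm_apply,
        Prod.mk.injEq]
      by_cases h1 : b = d <;> by_cases h2 : b' = d' <;> simp [h1, h2] <;> ring
    rw [hptB, hone]
    have hkey : (ptB R₁) ⊗ₖ (ptB R₂) +
        (ρ₁ ⊗ₖ (1 : Matrix B₁ B₁ ℂ)) ⊗ₖ (ρ₂ ⊗ₖ (1 : Matrix B₂ B₂ ℂ)) =
        (((1/2 : ℝ) : ℂ)) • (((ptB R₁ + ρ₁ ⊗ₖ (1 : Matrix B₁ B₁ ℂ))) ⊗ₖ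
            ((ptB R₂ + ρ₂ ⊗ₖ (1 : Matrix B₂ B₂ ℂ))) +
          ((ρ₁ ⊗ₖ (1 : Matrix B₁ B₁ ℂ) - ptB R₁)) ⊗ₖ
            ((ρ₂ ⊗ₖ (1 : Matrix B₂ B₂ ℂ) - ptB R₂))) := by
      ext ⟨⟨a, a'⟩, ⟨b, b'⟩⟩ ⟨⟨c, c'⟩, ⟨d, d'⟩⟩
      simp only [Matrix.kroneckerMap_apply, Matrix.sub_apply, Matrix.add_apply,
        Matrix.smul_apply, smul_eq_mul]
      push_cast
      ring
    have hadd : ∀ X Y : Matrix ((A₁ × B₁) × (A₂ × B₂)) ((A₁ × B₁) × (A₂ × B₂)) ℂ,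
        (Matrix.reindex e e) X + (Matrix.reindex e e) Y = (Matrix.reindex e e) (X + Y) := by
      intro X Y; ext i j; simp [Matrix.reindex_apply, Matrix.add_apply]
    rw [hadd, hkey, Matrix.reindex_apply]
    refine Matrix.PosSemidef.submatrix ?_ _
    exact psd_smul ((kron_psd hd₁ hd₂).add (kron_psd hc₁ hc₂)) (by norm_num)
  · -- the value is the product
    have hmul : J * (Matrix.reindex e e) (R₁ ⊗ₖ R₂) =
        (Matrix.reindex e e) ((J₁ ⊗ₖ J₂) * (R₁ ⊗ₖ R₂)) := by
      rw [hJdef, Matrix.reindex_apply, Matrix.reindex_apply, Matrix.reindex_apply,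
        Matrix.submatrix_mul_equiv]
    have htr : (J * (Matrix.reindex e e) (R₁ ⊗ₖ R₂)).trace =
        (J₁ * R₁).trace * (J₂ * R₂).trace := by
      rw [hmul, Matrix.reindex_apply, trace_submatrix_equiv, ← Matrix.mul_kronecker_mul,
        Matrix.trace_kronecker]
    rw [htr]
    have h1 := Complex.nonneg_iff.mp (trace_mul_nonneg hJ₁ hR₁)
    have h2 := Complex.nonneg_iff.mp (trace_mul_nonneg hJ₂ hR₂)
    rw [Complex.mul_re, ← h1.2, ← h2.2]
    ring
end

section
/- Γ(N) ≤ ||N∘T||_◇ for any quantum channel N, where the diamond norm of N∘T is given by the SDP: maximize (1/2)tr(J_N^{T_B}(X + X†)) over operators X and density operators ρ₀, ρ₁ with [[ρ₀⊗I, X],[X†, ρ₁⊗I]] ≥ 0. Specifically, any primal-feasible (R, ρ) for Γ yields the feasible point (X, ρ₀, ρ₁) = (R^{T_B}, ρ, ρ) with objective value tr(J_N R). -/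
open Matrix Kronecker ComplexOrder

/-- Watrous' SDP characterization of the diamond norm of `N ∘ T` (taken as the
definition here): maximize `(1/2) tr(J^{T_B}(X + X†))` over `X`, and density
operators `ρ₀, ρ₁` with `[[ρ₀⊗I, X],[X†, ρ₁⊗I]] ≥ 0`. -/
noncomputable def diamondNormNT {A B : Type*} [Fintype A] [Fintype B]
    [DecidableEq A] [DecidableEq B] (J : Matrix (A × B) (A × B) ℂ) : ℝ :=
  sSup {r | ∃ (X : Matrix (A × B) (A × B) ℂ) (ρ₀ ρ₁ : Matrix A A ℂ),
    ρ₀.PosSemidef ∧ ρ₀.trace = 1 ∧ ρ₁.PosSemidef ∧ ρ₁.trace = 1 ∧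
    (Matrix.fromBlocks (ρ₀ ⊗ₖ (1 : Matrix B B ℂ)) X
      Xᴴ (ρ₁ ⊗ₖ (1 : Matrix B B ℂ))).PosSemidef ∧
    r = (1 / 2) * (((ptB J) * (X + Xᴴ)).trace).re}

/-! ### Auxiliary lemmas -/

lemma ptB_conjTranspose {A B : Type*} (M : Matrix (A × B) (A × B) ℂ) :
    (ptB M)ᴴ = ptB Mᴴ := by
  ext ⟨a, b⟩ ⟨c, d⟩
  simp [ptB, conjTranspose_apply]

lemma ptB_isHermitian {A B : Type*} {M : Matrix (A × B) (A × B) ℂ} (h : M.IsHermitian) :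
    (ptB M).IsHermitian := by
  rw [Matrix.IsHermitian, ptB_conjTranspose, h.eq]

lemma trace_mul_eq_sum {n : Type*} [Fintype n] (M N : Matrix n n ℂ) :
    (M * N).trace = ∑ x : n × n, M x.1 x.2 * N x.2 x.1 := by
  rw [Fintype.sum_prod_type]
  simp [Matrix.trace, Matrix.diag, Matrix.mul_apply]

lemma trace_ptB_mul_ptB {A B : Type*} [Fintype A] [Fintype B]
    (M N : Matrix (A × B) (A × B) ℂ) :
    (ptB M * ptB N).trace = (M * N).trace := by
  rw [trace_mul_eq_sum, trace_mul_eq_sum]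
  exact Fintype.sum_equiv
    ⟨fun x => ((x.1.1, x.2.2), (x.2.1, x.1.2)), fun x => ((x.1.1, x.2.2), (x.2.1, x.1.2)),
      by rintro ⟨⟨a, b⟩, ⟨c, d⟩⟩; rfl, by rintro ⟨⟨a, b⟩, ⟨c, d⟩⟩; rfl⟩
    _ _ (by rintro ⟨⟨a, b⟩, ⟨c, d⟩⟩; rfl)

lemma kron_one_isHermitian {A B : Type*} [Fintype A] [Fintype B] [DecidableEq B]
    {ρ : Matrix A A ℂ} (h : ρ.IsHermitian) : (ρ ⊗ₖ (1 : Matrix B B ℂ)).IsHermitian := by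
  ext ⟨a, b⟩ ⟨c, d⟩
  simp only [conjTranspose_apply, kroneckerMap_apply, star_mul']
  by_cases hbd : d = b
  · subst hbd
    simp [h.apply a c, mul_comm]
  · have hdb : b ≠ d := fun h' => hbd h'.symm
    simp [Matrix.one_apply, hbd, hdb]

/-- The key block feasibility: if `X` is Hermitian and `S ± X ⪰ 0` then
`[[S, X], [Xᴴ, S]] ⪰ 0`. -/
lemma fromBlocks_posSemidef_of_sub_add {n : Type*} [Fintype n] {S X : Matrix n n ℂ}
    (hS : S.IsHermitian) (hX : X.IsHermitian)
    (h1 : (S - X).PosSemidef) (h2 : (X + S).PosSemidef) :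
    (Matrix.fromBlocks S X Xᴴ S).PosSemidef := by
  rw [posSemidef_iff_dotProduct_mulVec]
  constructor
  · rw [isHermitian_fromBlocks_iff]
    exact ⟨hS, rfl, conjTranspose_conjTranspose X, hS⟩
  · intro z
    set u := z ∘ Sum.inl with hu
    set v := z ∘ Sum.inr with hv
    have key : star z ⬝ᵥ (Matrix.fromBlocks S X Xᴴ S *ᵥ z) =
        (2⁻¹ : ℂ) * (star (u + v) ⬝ᵥ ((X + S) *ᵥ (u + v))
          + star (u - v) ⬝ᵥ ((S - X) *ᵥ (u - v))) := by
      simp only [Matrix.dotProduct_block, Matrix.fromBlocks_mulVec, Sum.elim_comp_inl,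
        Sum.elim_comp_inr, Matrix.add_mulVec, Matrix.sub_mulVec, Matrix.mulVec_add,
        Matrix.mulVec_sub, dotProduct_add, dotProduct_sub, star_add, star_sub,
        add_dotProduct, sub_dotProduct, hX.eq]
      have hcu : star z ∘ Sum.inl = star u := rfl
      have hcv : star z ∘ Sum.inr = star v := rfl
      rw [hcu, hcv]
      ring
    rw [key]
    refine mul_nonneg ?_ (add_nonneg (h2.dotProduct_mulVec_nonneg _) (h1.dotProduct_mulVec_nonneg _))
    rw [Complex.le_def]
    norm_num

lemma fromBlocks_diag_posSemidef {n m : Type*} [Fintype n] [Fintype m]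
    {P : Matrix n n ℂ} {Q : Matrix m m ℂ} (hP : P.PosSemidef) (hQ : Q.PosSemidef) :
    (Matrix.fromBlocks P 0 0 Q).PosSemidef := by
  rw [posSemidef_iff_dotProduct_mulVec]
  constructor
  · rw [isHermitian_fromBlocks_iff]
    exact ⟨hP.1, by simp, by simp, hQ.1⟩
  · intro z
    simp only [Matrix.dotProduct_block, Matrix.fromBlocks_mulVec, Sum.elim_comp_inl,
      Sum.elim_comp_inr, Matrix.zero_mulVec, add_zero, zero_add]
    exact add_nonneg (hP.dotProduct_mulVec_nonneg _) (hQ.dotProduct_mulVec_nonneg _)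

lemma diag_nonneg_of_posSemidef {n : Type*} [Fintype n] [DecidableEq n]
    {ρ : Matrix n n ℂ} (h : ρ.PosSemidef) (a : n) : 0 ≤ ρ a a := by
  have h2 := h.dotProduct_mulVec_nonneg (Pi.single a 1)
  have e : star (Pi.single a (1 : ℂ)) = (Pi.single a (1 : ℂ) : n → ℂ) := by
    funext i; by_cases hia : i = a <;> simp [Pi.single_apply, hia]
  rw [e] at h2
  simpa [Matrix.mulVec_single, single_dotProduct] using h2

lemma diag_le_one_of_trace_one {n : Type*} [Fintype n] [DecidableEq n]
    {ρ : Matrix n n ℂ} (h : ρ.PosSemidef) (htr : ρ.trace = 1) (a : n) :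
    (ρ a a).re ≤ 1 := by
  have hle : ρ a a ≤ 1 := by
    calc ρ a a ≤ ∑ b, ρ b b :=
          Finset.single_le_sum (fun b _ => diag_nonneg_of_posSemidef h b)
            (Finset.mem_univ a)
      _ = 1 := htr
  exact (Complex.le_def.mp hle).1

/-- Entry bound from the PSD block constraint: `|X p q| ≤ 1`. -/
lemma entry_abs_le_one {n : Type*} [Fintype n] [DecidableEq n]
    {S₀ S₁ X : Matrix n n ℂ}
    (hM : (Matrix.fromBlocks S₀ X Xᴴ S₁).PosSemidef)
    (p q : n) (h0 : (S₀ p p).re ≤ 1) (h1 : (S₁ q q).re ≤ 1) :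
    ‖X p q‖ ≤ 1 := by
  set c := X p q with hc
  have h := hM.dotProduct_mulVec_nonneg (Sum.elim (Pi.single p c) (Pi.single q (-1)))
  have hexp : star (Sum.elim (Pi.single p c) (Pi.single q (-1 : ℂ))) ⬝ᵥ
      (Matrix.fromBlocks S₀ X Xᴴ S₁ *ᵥ Sum.elim (Pi.single p c) (Pi.single q (-1 : ℂ)))
      = (Complex.normSq c : ℂ) * S₀ p p - 2 * (Complex.normSq c : ℂ) + S₁ q q := by
    simp only [Matrix.dotProduct_block, Matrix.fromBlocks_mulVec, Sum.elim_comp_inl,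
      Sum.elim_comp_inr, Function.star_sumElim]
    have e1 : star (Pi.single p c) = (Pi.single p (star c) : n → ℂ) := by
      funext i; by_cases hip : i = p <;> simp [Pi.single_apply, hip]
    have e2 : star (Pi.single q (-1 : ℂ)) = (Pi.single q (-1 : ℂ) : n → ℂ) := by
      funext i; by_cases hiq : i = q <;> simp [Pi.single_apply, hiq]
    rw [e1, e2]
    simp only [Matrix.mulVec_single, single_dotProduct, Pi.add_apply,
      dotProduct_add, conjTranspose_apply, Pi.smul_apply, Matrix.col_apply, op_smul_eq_mul]
    rw [Complex.star_def, ← hc]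
    have hcc : (starRingEnd ℂ) c * c = (Complex.normSq c : ℂ) := by
      rw [mul_comm]; exact Complex.mul_conj c
    linear_combination (S₀ p p - 2) * hcc
  rw [hexp] at h
  have hre := (Complex.le_def.mp h).1
  simp only [Complex.add_re, Complex.sub_re, Complex.mul_re, Complex.ofReal_re,
    Complex.ofReal_im, Complex.zero_re, Complex.re_ofNat, Complex.im_ofNat] at hre
  have hsq : Complex.normSq c ≤ 1 := by nlinarith [Complex.normSq_nonneg c]
  have habs : ‖c‖ ^ 2 ≤ 1 := by rw [Complex.sq_norm]; exact hsq
  nlinarith [norm_nonneg c]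

/-- `Γ(N) ≤ ‖N ∘ T‖_◇`. Moreover any primal-feasible `(R, ρ)` for `Γ`
yields the feasible point `(X, ρ₀, ρ₁) = (R^{T_B}, ρ, ρ)` for the diamond norm SDP,
with objective value `tr(J_N R)`. -/
theorem stmt_12 {A B : Type*} [Fintype A] [Fintype B] [DecidableEq A] [DecidableEq B]
    (J : Matrix (A × B) (A × B) ℂ) (hJ : J.PosSemidef) :
    (∀ (R : Matrix (A × B) (A × B) ℂ) (ρ : Matrix A A ℂ),
      R.PosSemidef → ρ.PosSemidef → ρ.trace = 1 →
      (ρ ⊗ₖ (1 : Matrix B B ℂ) - ptB R).PosSemidef →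
      (ptB R + ρ ⊗ₖ (1 : Matrix B B ℂ)).PosSemidef →
      (Matrix.fromBlocks (ρ ⊗ₖ (1 : Matrix B B ℂ)) (ptB R)
          (ptB R)ᴴ (ρ ⊗ₖ (1 : Matrix B B ℂ))).PosSemidef ∧
        (1 / 2) * (((ptB J) * (ptB R + (ptB R)ᴴ)).trace).re = ((J * R).trace).re) ∧
    Gamma J ≤ diamondNormNT J := by
  have main : ∀ (R : Matrix (A × B) (A × B) ℂ) (ρ : Matrix A A ℂ),
      R.PosSemidef → ρ.PosSemidef → ρ.trace = 1 →
      (ρ ⊗ₖ (1 : Matrix B B ℂ) - ptB R).PosSemidef →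
      (ptB R + ρ ⊗ₖ (1 : Matrix B B ℂ)).PosSemidef →
      (Matrix.fromBlocks (ρ ⊗ₖ (1 : Matrix B B ℂ)) (ptB R)
          (ptB R)ᴴ (ρ ⊗ₖ (1 : Matrix B B ℂ))).PosSemidef ∧
        (1 / 2) * (((ptB J) * (ptB R + (ptB R)ᴴ)).trace).re = ((J * R).trace).re := by
    intro R ρ hR hρ htr h1 h2
    have hXh : (ptB R).IsHermitian := ptB_isHermitian hR.1
    refine ⟨fromBlocks_posSemidef_of_sub_add (kron_one_isHermitian hρ.1) hXh h1 h2, ?_⟩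
    rw [hXh.eq]
    have : ptB J * (ptB R + ptB R) = ptB J * ptB R + ptB J * ptB R := by
      rw [mul_add]
    rw [this, Matrix.trace_add, trace_ptB_mul_ptB, Complex.add_re]
    ring
  refine ⟨main, ?_⟩
  rw [Gamma, diamondNormNT]
  set s := {r | ∃ (R : Matrix (A × B) (A × B) ℂ) (ρ : Matrix A A ℂ),
    R.PosSemidef ∧ ρ.PosSemidef ∧ ρ.trace = 1 ∧
    (ρ ⊗ₖ (1 : Matrix B B ℂ) - ptB R).PosSemidef ∧
    (ptB R + ρ ⊗ₖ (1 : Matrix B B ℂ)).PosSemidef ∧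
    r = ((J * R).trace).re} with hs
  set t := {r | ∃ (X : Matrix (A × B) (A × B) ℂ) (ρ₀ ρ₁ : Matrix A A ℂ),
    ρ₀.PosSemidef ∧ ρ₀.trace = 1 ∧ ρ₁.PosSemidef ∧ ρ₁.trace = 1 ∧
    (Matrix.fromBlocks (ρ₀ ⊗ₖ (1 : Matrix B B ℂ)) X
      Xᴴ (ρ₁ ⊗ₖ (1 : Matrix B B ℂ))).PosSemidef ∧
    r = (1 / 2) * (((ptB J) * (X + Xᴴ)).trace).re} with ht
  have hsub : s ⊆ t := by
    rintro r ⟨R, ρ, hR, hρ, htr, h1, h2, rfl⟩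
    obtain ⟨hblk, hval⟩ := main R ρ hR hρ htr h1 h2
    exact ⟨ptB R, ρ, ρ, hρ, htr, hρ, htr, hblk, hval.symm⟩
  -- boundedness of the target set
  set C : ℝ := ∑ x : (A × B) × (A × B), ‖ptB J x.1 x.2‖ with hC
  have hbdd : BddAbove t := by
    refine ⟨C, ?_⟩
    rintro r ⟨X, ρ₀, ρ₁, hρ₀, htr₀, hρ₁, htr₁, hblk, rfl⟩
    have hXb : ∀ p q : A × B, ‖X p q‖ ≤ 1 := by
      intro p q
      refine entry_abs_le_one hblk p q ?_ ?_
      · rcases p with ⟨a, b⟩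
        simpa [kroneckerMap_apply, Matrix.one_apply] using
          diag_le_one_of_trace_one hρ₀ htr₀ a
      · rcases q with ⟨a, b⟩
        simpa [kroneckerMap_apply, Matrix.one_apply] using
          diag_le_one_of_trace_one hρ₁ htr₁ a
    rw [trace_mul_eq_sum, Complex.re_sum]
    have hterm : ∀ x : (A × B) × (A × B),
        (ptB J x.1 x.2 * (X + Xᴴ) x.2 x.1).re ≤ ‖ptB J x.1 x.2‖ * 2 := by
      intro x
      refine (Complex.re_le_norm _).trans ?_
      rw [norm_mul]
      refine mul_le_mul_of_nonneg_left ?_ (norm_nonneg _)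
      have : (X + Xᴴ) x.2 x.1 = X x.2 x.1 + star (X x.1 x.2) := by
        simp [conjTranspose_apply]
      rw [this]
      calc ‖X x.2 x.1 + star (X x.1 x.2)‖
          ≤ ‖X x.2 x.1‖ + ‖star (X x.1 x.2)‖ :=
            norm_add_le _ _
        _ ≤ 1 + 1 :=
            add_le_add (hXb x.2 x.1)
              (by rw [Complex.star_def, Complex.norm_conj]; exact hXb x.1 x.2)
        _ = 2 := by norm_num
    calc (1 / 2) * ∑ x : (A × B) × (A × B), (ptB J x.1 x.2 * (X + Xᴴ) x.2 x.1).re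
        ≤ (1 / 2) * ∑ x : (A × B) × (A × B), ‖ptB J x.1 x.2‖ * 2 := by
          refine mul_le_mul_of_nonneg_left ?_ (by norm_num)
          exact Finset.sum_le_sum fun x _ => hterm x
      _ = C := by
          rw [hC, Finset.mul_sum]
          refine Finset.sum_congr rfl fun x _ => by ring
  rcases Set.eq_empty_or_nonempty s with hse | hsne
  · rw [hse, Real.sSup_empty]
    rcases Set.eq_empty_or_nonempty t with hte | htne
    · rw [hte, Real.sSup_empty]
    · obtain ⟨r₀, X, ρ₀, ρ₁, hρ₀, htr₀, hρ₁, htr₁, hblk, _⟩ := htne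
      have hS₀ : (ρ₀ ⊗ₖ (1 : Matrix B B ℂ)).PosSemidef := by
        have := hblk.submatrix (Sum.inl : (A × B) → (A × B) ⊕ (A × B))
        convert this using 1
        ext i j; simp
      have hS₁ : (ρ₁ ⊗ₖ (1 : Matrix B B ℂ)).PosSemidef := by
        have := hblk.submatrix (Sum.inr : (A × B) → (A × B) ⊕ (A × B))
        convert this using 1
        ext i j; simp
      have h0t : (0 : ℝ) ∈ t := by
        refine ⟨0, ρ₀, ρ₁, hρ₀, htr₀, hρ₁, htr₁, ?_, by simp⟩
        simpa using fromBlocks_diag_posSemidef hS₀ hS₁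
      exact le_csSup hbdd h0t
  · exact csSup_le_csSup hbdd hsne hsub
end
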